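/- Let u : ℤ × ℤ → ℝ satisfy u_{n+1,m+1} = u_{n,m} + 1/(u_{n+1,m} − u_{n,m+1}) for all n,m (assuming u_{n+1,m} ≠ u_{n,m+1} throughout). Then the function U_{n,m} := 1/(u_{n+1,m} − u_{n−1,m}) (assuming u_{n+1,m} ≠ u_{n−1,m} throughout) satisfies the linearized discrete equation U_{n+1,m+1} = U_{n,m} − (U_{n+1,m} − U_{n,m+1})/(u_{n+1,m} − u_{n,m+1})². -/

import Mathlib

lemma key_alg (a b c d e f g w : ℝ)
    (hbd : b ≠ d) (hfe : f ≠ e) (hgd : g ≠ d) (hbc : b ≠ c) (hdc : d ≠ c)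
    (he : e = a + 1/(b-d)) (hg : g = b + 1/(f-e)) (hw : w = a - 1/(d-c)) :
    1/(g-d) = 1/(b-c) - (1/(f-a) - 1/(e-w))/(b-d)^2 := by
  set p := b - d with hp
  set q := f - e with hq
  set r := d - c with hr
  have h1 : p ≠ 0 := sub_ne_zero.mpr hbd
  have h2 : q ≠ 0 := sub_ne_zero.mpr hfe
  have h3 : r ≠ 0 := sub_ne_zero.mpr hdc
  have h4 : b - c ≠ 0 := sub_ne_zero.mpr hbc
  have hbc' : b - c = p + r := by rw [hp, hr]; ring
  have hpr : p + r ≠ 0 := by rw [← hbc']; exact h4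
  have hgd' : g - d = (p*q+1)/q := by
    rw [hg, hq]; field_simp; ring
  have hfa' : f - a = (p*q+1)/p := by
    have : a = e - 1/p := by rw [he]; ring
    rw [this, hq]; field_simp; ring
  have hew' : e - w = (p+r)/(p*r) := by
    rw [hw, he]; field_simp; ring
  have hpq1 : p*q+1 ≠ 0 := by
    intro h0
    apply sub_ne_zero.mpr hgd
    rw [hgd', h0, zero_div]
  rw [hgd', hfa', hew', hbc']
  rw [one_div_div, one_div_div, one_div_div]
  rw [div_eq_iff hpq1, eq_comm, ← sub_eq_zero]
  field_simp
  ring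


/-- For a solution `u` of the discrete KdV equation
`u_{n+1,m+1} = u_{n,m} + 1/(u_{n+1,m} − u_{n,m+1})`, the function
`U_{n,m} = 1/(u_{n+1,m} − u_{n−1,m})` solves the linearized equation
`U_{n+1,m+1} = U_{n,m} − (U_{n+1,m} − U_{n,m+1})/(u_{n+1,m} − u_{n,m+1})²`. -/
theorem discrete_KdV_symmetry_solves_linearization
    (u : ℤ → ℤ → ℝ)
    (hden : ∀ n m, u (n + 1) m ≠ u n (m + 1))
    (hden2 : ∀ n m, u (n + 1) m ≠ u (n - 1) m)
    (heq : ∀ n m, u (n + 1) (m + 1) = u n m + 1 / (u (n + 1) m - u n (m + 1))) :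
    ∀ n m : ℤ,
      (fun n m => 1 / (u (n + 1) m - u (n - 1) m)) (n + 1) (m + 1)
        = (fun n m => 1 / (u (n + 1) m - u (n - 1) m)) n m
          - ((fun n m => 1 / (u (n + 1) m - u (n - 1) m)) (n + 1) m
              - (fun n m => 1 / (u (n + 1) m - u (n - 1) m)) n (m + 1))
            / (u (n + 1) m - u n (m + 1)) ^ 2 := by
  intro n m
  simp only
  have e1 : n + 1 + 1 = n + 2 := by ring
  have e2 : n + 1 - 1 = n := by ring
  have e3 : n - 1 + 1 = n := by ring
  rw [e1, e2]
  set a := u n m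
  set b := u (n + 1) m
  set c := u (n - 1) m
  set d := u n (m + 1)
  set e := u (n + 1) (m + 1)
  set f := u (n + 2) m
  set g := u (n + 2) (m + 1)
  set w := u (n - 1) (m + 1)
  -- equations
  have he : e = a + 1 / (b - d) := heq n m
  have hg : g = b + 1 / (f - e) := by
    have := heq (n + 1) m
    rwa [e1] at this
  have hdw : d = c + 1 / (a - w) := by
    have := heq (n - 1) m
    rwa [e3] at this
  -- nonvanishing
  have hbd : b ≠ d := hden n m
  have hfe : f ≠ e := by
    have := hden (n + 1) m
    rwa [e1] at this
  have haw : a ≠ w := by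
    have := hden (n - 1) m
    rwa [e3] at this
  have hbc : b ≠ c := hden2 n m
  have hgd : g ≠ d := by
    have := hden2 (n + 1) (m + 1)
    rwa [e1, e2] at this
  have hdc : d ≠ c := by
    intro h0
    have : (1 : ℝ) / (a - w) = 0 := by
      have := hdw
      rw [h0] at this
      linarith
    have haw0 : a - w ≠ 0 := sub_ne_zero.mpr haw
    simp [div_eq_zero_iff, haw0] at this
  have hw : w = a - 1 / (d - c) := by
    have h0 : a - w ≠ 0 := sub_ne_zero.mpr haw
    have hdc' : d - c = 1 / (a - w) := by linarith [hdw]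
    rw [hdc']
    field_simp
    ring
  exact key_alg a b c d e f g w hbd hfe hgd hbc hdc he hg hw
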